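/- Let G be a connected k-uniform hypergraph on {1,…,n} with at least one edge. A nonzero vector x ∈ ℂ^n satisfies ((D+A) x^{k−1})_i = 0 for all i if and only if there exist a nonzero γ ∈ ℂ and integers α_1,…,α_n such that x_i = γ·exp(2πα_i√(−1)/k) for all i, and for every edge e ∈ E there is an integer σ_e with 2·Σ_{j∈e} α_j = 2σ_e·k + k (equivalently, 2·Σ_{j∈e} α_j ≡ k (mod 2k)). -/

import Mathlib

open Finset

/-- Degree of vertex `i` in the hypergraph with edge set `E`. -/
def hdeg {n : ℕ} (E : Finset (Finset (Fin n))) (i : Fin n) : ℕ :=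
  (E.filter fun e => i ∈ e).card

/-- Laplacian tensor action `((D - A) x^{k-1})_i` over ℂ. -/
noncomputable def lapC (k : ℕ) {n : ℕ} (E : Finset (Finset (Fin n)))
    (x : Fin n → ℂ) (i : Fin n) : ℂ :=
  (hdeg E i : ℂ) * x i ^ (k - 1) -
    ∑ e ∈ E.filter (fun e => i ∈ e), ∏ j ∈ e.erase i, x j

/-- Signless Laplacian tensor action `((D + A) x^{k-1})_i` over ℂ. -/
noncomputable def slapC (k : ℕ) {n : ℕ} (E : Finset (Finset (Fin n)))
    (x : Fin n → ℂ) (i : Fin n) : ℂ :=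
  (hdeg E i : ℂ) * x i ^ (k - 1) +
    ∑ e ∈ E.filter (fun e => i ∈ e), ∏ j ∈ e.erase i, x j

/-- Laplacian tensor action `((D - A) x^{k-1})_i` over ℝ. -/
noncomputable def lapR (k : ℕ) {n : ℕ} (E : Finset (Finset (Fin n)))
    (x : Fin n → ℝ) (i : Fin n) : ℝ :=
  (hdeg E i : ℝ) * x i ^ (k - 1) -
    ∑ e ∈ E.filter (fun e => i ∈ e), ∏ j ∈ e.erase i, x j

/-- Signless Laplacian tensor action `((D + A) x^{k-1})_i` over ℝ. -/
noncomputable def slapR (k : ℕ) {n : ℕ} (E : Finset (Finset (Fin n)))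
    (x : Fin n → ℝ) (i : Fin n) : ℝ :=
  (hdeg E i : ℝ) * x i ^ (k - 1) +
    ∑ e ∈ E.filter (fun e => i ∈ e), ∏ j ∈ e.erase i, x j

/-- The hypergraph with edge set `E` is connected: every pair of distinct vertices is
joined by a chain of edges with consecutive edges intersecting. -/
def HConnected {n : ℕ} (E : Finset (Finset (Fin n))) : Prop :=
  ∀ i j : Fin n, i ≠ j → ∃ m : ℕ, ∃ es : Fin (m + 1) → Finset (Fin n),
    (∀ r, es r ∈ E) ∧ i ∈ es 0 ∧ j ∈ es (Fin.last m) ∧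
    ∀ r : Fin m, (es r.castSucc ∩ es r.succ).Nonempty

private lemma real_sum_eq {ι : Type*} {s : Finset ι} {g : ι → ℝ} {b : ℝ}
    (hle : ∀ a ∈ s, g a ≤ b) (h : (s.card : ℝ) * b ≤ ∑ a ∈ s, g a) :
    ∀ a ∈ s, g a = b := by
  intro a ha
  by_contra hne
  have hlt : ∑ a ∈ s, g a < ∑ _a ∈ s, b :=
    Finset.sum_lt_sum hle ⟨a, ha, lt_of_le_of_ne (hle a ha) hne⟩
  rw [Finset.sum_const, nsmul_eq_mul] at hlt
  linarith

private lemma tri_eq {ι : Type*} {s : Finset ι} {f : ι → ℂ} {c : ℂ}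
    (habs : ∀ a ∈ s, ‖f a‖ = ‖c‖)
    (hsum : ∑ a ∈ s, f a = (s.card : ℂ) * c) :
    ∀ a ∈ s, f a = c := by
  intro a ha
  have key : ∀ b ∈ s, (f b * (starRingEnd ℂ) c).re ≤ ‖c‖ ^ 2 := by
    intro b hb
    calc (f b * (starRingEnd ℂ) c).re ≤ ‖f b * (starRingEnd ℂ) c‖ :=
      Complex.re_le_norm _
    _ = ‖c‖ ^ 2 := by
        rw [norm_mul, Complex.norm_conj, habs b hb]; ring
  have hsum2 : (s.card : ℝ) * ‖c‖ ^ 2 ≤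
      ∑ b ∈ s, (f b * (starRingEnd ℂ) c).re := by
    have h1 : (∑ b ∈ s, f b * (starRingEnd ℂ) c) =
        (s.card : ℂ) * (Complex.normSq c : ℝ) := by
      rw [← Finset.sum_mul, hsum, mul_assoc, Complex.mul_conj]
    have h2 := congrArg Complex.re h1
    rw [Complex.re_sum] at h2
    rw [h2]
    simp [Complex.sq_norm]
  have hre : (f a * (starRingEnd ℂ) c).re = ‖c‖ ^ 2 :=
    real_sum_eq key hsum2 a ha
  have hz : Complex.normSq (f a - c) = 0 := by
    rw [Complex.normSq_sub, hre, ← Complex.sq_norm, ← Complex.sq_norm, habs a ha]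
    ring
  exact sub_eq_zero.mp (Complex.normSq_eq_zero.mp hz)

private lemma chain_prop {n : ℕ} {E : Finset (Finset (Fin n))} (P : Fin n → Prop)
    (hP : ∀ e ∈ E, ∀ u ∈ e, P u → ∀ v ∈ e, P v)
    {i j : Fin n}
    {m : ℕ} {es : Fin (m + 1) → Finset (Fin n)}
    (hes : ∀ r, es r ∈ E) (hi : i ∈ es 0) (hj : j ∈ es (Fin.last m))
    (hint : ∀ r : Fin m, (es r.castSucc ∩ es r.succ).Nonempty)
    (hPi : P i) : P j := by
  suffices h : ∀ r : ℕ, ∀ hr : r < m + 1, ∀ v ∈ es ⟨r, hr⟩, P v by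
    exact h m (by omega) j hj
  intro r
  induction r with
  | zero =>
      intro hr v hv
      rw [Fin.mk_zero] at hv
      exact hP (es 0) (hes 0) i hi hPi v hv
  | succ r ih =>
      intro hr v hv
      have hrm : r < m := by omega
      obtain ⟨w, hw⟩ := hint ⟨r, hrm⟩
      rw [Finset.mem_inter, Fin.castSucc_mk, Fin.succ_mk] at hw
      have hPw : P w := ih (by omega) w hw.1
      exact hP (es ⟨r + 1, hr⟩) (hes _) w hw.2 hPw v hv

private lemma prod_form {n k : ℕ} (γ : ℂ) (α : Fin n → ℤ) (x : Fin n → ℂ)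
    (hα : ∀ i, x i = γ * Complex.exp (2 * Real.pi * (α i : ℂ) * Complex.I / k))
    (e : Finset (Fin n)) (hcard : e.card = k) :
    ∏ j ∈ e, x j =
      γ ^ k * Complex.exp (2 * Real.pi * ((∑ j ∈ e, α j : ℤ) : ℂ) * Complex.I / k) := by
  calc ∏ j ∈ e, x j
      = ∏ j ∈ e, (γ * Complex.exp (2 * Real.pi * ((α j : ℤ) : ℂ) * Complex.I / k)) :=
        Finset.prod_congr rfl (fun j _ => hα j)
    _ = γ ^ e.card * Complex.exp (∑ j ∈ e, 2 * Real.pi * ((α j : ℤ) : ℂ) * Complex.I / k) := by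
        rw [Finset.prod_mul_distrib, Finset.prod_const, Complex.exp_sum]
    _ = _ := by
        rw [hcard]
        congr 1
        rw [Finset.sum_congr rfl (fun j _ => show
          2 * Real.pi * ((α j : ℤ) : ℂ) * Complex.I / k =
            ((α j : ℤ) : ℂ) * (2 * Real.pi * Complex.I / k) from by ring),
          ← Finset.sum_mul]
        push_cast
        ring

theorem stmt_5 {n k : ℕ} (hk : 3 ≤ k) (hn : k ≤ n)
    (E : Finset (Finset (Fin n))) (hE : ∀ e ∈ E, e.card = k)
    (hconn : HConnected E) (hne : E.Nonempty)
    (x : Fin n → ℂ) :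
    (x ≠ 0 ∧ ∀ i, slapC k E x i = 0) ↔
      ∃ γ : ℂ, γ ≠ 0 ∧ ∃ α : Fin n → ℤ,
        (∀ i, x i = γ * Complex.exp (2 * Real.pi * (α i : ℂ) * Complex.I / k)) ∧
        (∀ e ∈ E, ∃ σ : ℤ, 2 * ∑ j ∈ e, α j = 2 * σ * k + k) := by
  have hn3 : 3 ≤ n := le_trans hk hn
  have hk0C : (k : ℂ) ≠ 0 := Nat.cast_ne_zero.mpr (by omega)
  have hkk : k - 1 + 1 = k := by omega
  have hπ : (Real.pi : ℂ) ≠ 0 := by exact_mod_cast Real.pi_ne_zero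
  constructor
  · rintro ⟨hx0, heq⟩
    -- maximum modulus
    obtain ⟨imax, -, hmax⟩ := Finset.exists_max_image Finset.univ
      (fun i => ‖x i‖) ⟨⟨0, by omega⟩, Finset.mem_univ _⟩
    set M := ‖x imax‖ with hMdef
    have hM : ∀ i, ‖x i‖ ≤ M := fun i => hmax i (Finset.mem_univ i)
    have hMpos : 0 < M := by
      obtain ⟨i, hi⟩ := Function.ne_iff.mp hx0
      exact lt_of_lt_of_le (norm_pos_iff.mpr hi) (hM i)
    -- key local analysis at a vertex of maximal modulus
    have keyA : ∀ i : Fin n, ‖x i‖ = M → ∀ e ∈ E, i ∈ e →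
        (∀ j ∈ e, ‖x j‖ = M) ∧ (∏ j ∈ e, x j = -(x i ^ k)) := by
      intro i hiM
      have heqi := heq i
      simp only [slapC, hdeg] at heqi
      set F := E.filter (fun e => i ∈ e) with hF
      have hsum : ∑ e ∈ F, ∏ j ∈ e.erase i, x j = (F.card : ℂ) * (-(x i ^ (k - 1))) := by
        linear_combination heqi
      have hcard_erase : ∀ e ∈ F, (e.erase i).card = k - 1 := by
        intro e he
        rw [hF, Finset.mem_filter] at he
        rw [Finset.card_erase_of_mem he.2, hE e he.1]
      have hterm_le : ∀ e ∈ F, ‖∏ j ∈ e.erase i, x j‖ ≤ M ^ (k - 1) := by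
        intro e he
        rw [norm_prod]
        calc ∏ j ∈ e.erase i, ‖x j‖ ≤ ∏ _j ∈ e.erase i, M :=
          Finset.prod_le_prod (fun j _ => norm_nonneg _) (fun j _ => hM j)
        _ = M ^ (k - 1) := by rw [Finset.prod_const, hcard_erase e he]
      have habs_eq : ∀ e ∈ F, ‖∏ j ∈ e.erase i, x j‖ = M ^ (k - 1) := by
        apply real_sum_eq hterm_le
        calc (F.card : ℝ) * M ^ (k - 1)
            = ‖∑ e ∈ F, ∏ j ∈ e.erase i, x j‖ := by
              rw [hsum, norm_mul, norm_neg, Complex.norm_natCast,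
                norm_pow, hiM]
          _ ≤ ∑ e ∈ F, ‖∏ j ∈ e.erase i, x j‖ :=
              norm_sum_le _ _
      have hprod_eq : ∀ e ∈ F, ∏ j ∈ e.erase i, x j = -(x i ^ (k - 1)) := by
        apply tri_eq _ hsum
        intro e he
        rw [habs_eq e he, norm_neg, norm_pow, hiM]
      intro e he hie
      have heF : e ∈ F := by rw [hF, Finset.mem_filter]; exact ⟨he, hie⟩
      constructor
      · intro j hj
        by_cases hji : j = i
        · rw [hji]; exact hiM
        · have hjer : j ∈ e.erase i := Finset.mem_erase.mpr ⟨hji, hj⟩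
          by_contra hne'
          have hjlt : ‖x j‖ < M := lt_of_le_of_ne (hM j) hne'
          have habs := habs_eq e heF
          rw [norm_prod] at habs
          have hpos : ∀ l ∈ e.erase i, 0 < ‖x l‖ := by
            intro l hl
            rcases eq_or_lt_of_le (norm_nonneg (x l)) with h0 | h0
            · exfalso
              have hz : ∏ j ∈ e.erase i, ‖x j‖ = 0 :=
                Finset.prod_eq_zero hl h0.symm
              rw [hz] at habs
              have := pow_pos hMpos (k - 1)
              linarith
            · exact h0
          have hlt : ∏ l ∈ e.erase i, ‖x l‖ < ∏ _l ∈ e.erase i, M :=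
            Finset.prod_lt_prod hpos (fun l _ => hM l) ⟨j, hjer, hjlt⟩
          rw [Finset.prod_const, hcard_erase e heF] at hlt
          linarith
      · have h1 := hprod_eq e heF
        have h2 : x i * ∏ j ∈ e.erase i, x j = ∏ j ∈ e, x j :=
          Finset.mul_prod_erase e x hie
        rw [h1] at h2
        rw [← h2]
        have h3 : x i ^ k = x i ^ (k - 1) * x i := by rw [← pow_succ, hkk]
        rw [h3]; ring
    -- all moduli equal M
    have hall : ∀ i, ‖x i‖ = M := by
      intro j
      by_cases hji : j = imax
      · rw [hji]
      · obtain ⟨m, es, hes, hi0, hjl, hint⟩ := hconn imax j (fun h => hji h.symm)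
        exact chain_prop (fun v => ‖x v‖ = M)
          (fun e he u hu hPu v hv => (keyA u hPu e he hu).1 v hv)
          hes hi0 hjl hint hMdef.symm
    have keyC : ∀ e ∈ E, ∀ i ∈ e, ∏ j ∈ e, x j = -(x i ^ k) :=
      fun e he i hi => (keyA i (hall i) e he hi).2
    set i0 : Fin n := ⟨0, by omega⟩ with hi0def
    have hγ : x i0 ≠ 0 := by
      intro h
      have := hall i0
      rw [h] at this
      simp at this
      rw [← this] at hMpos
      exact lt_irrefl 0 hMpos
    have hconst : ∀ j, x j ^ k = x i0 ^ k := by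
      intro j
      by_cases h : j = i0
      · rw [h]
      · obtain ⟨m, es, hes, hi0m, hjl, hint⟩ := hconn i0 j (fun hh => h hh.symm)
        exact chain_prop (fun v => x v ^ k = x i0 ^ k)
          (fun e he u hu hPu v hv => by
            have h1 := keyC e he u hu
            have h2 := keyC e he v hv
            have h3 : x v ^ k = x u ^ k := by
              have h4 := h1.symm.trans h2
              linear_combination h4
            exact h3.trans hPu)
          hes hi0m hjl hint rfl
    haveI : NeZero k := ⟨by omega⟩
    have hroot : ∀ i, ∃ a : ℤ,
        x i = x i0 * Complex.exp (2 * Real.pi * (a : ℂ) * Complex.I / k) := by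
      intro i
      have hpow : (x i / x i0) ^ k = 1 := by
        rw [div_pow, hconst i, div_self (pow_ne_zero k hγ)]
      obtain ⟨a, _, ha⟩ :=
        (Complex.isPrimitiveRoot_exp k (by omega)).eq_pow_of_pow_eq_one hpow
      refine ⟨(a : ℤ), ?_⟩
      have h2 : x i / x i0 =
          Complex.exp (2 * Real.pi * ((a : ℤ) : ℂ) * Complex.I / k) := by
        rw [← ha, ← Complex.exp_nat_mul]
        congr 1
        push_cast
        ring
      rw [← h2]
      field_simp
    choose α hα using hroot
    refine ⟨x i0, hγ, α, hα, ?_⟩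
    intro e heE
    have hcard := hE e heE
    have hene : e.Nonempty := by rw [← Finset.card_pos, hcard]; omega
    obtain ⟨i, hi⟩ := hene
    have hprod := keyC e heE i hi
    have hprod2 := prod_form (x i0) α x hα e hcard
    have hxeq : x i0 ^ k *
        Complex.exp (2 * Real.pi * ((∑ j ∈ e, α j : ℤ) : ℂ) * Complex.I / k) =
        x i0 ^ k * (-1) := by
      rw [← hprod2, hprod, hconst i]; ring
    have hexp : Complex.exp (2 * Real.pi * ((∑ j ∈ e, α j : ℤ) : ℂ) * Complex.I / k)
        = -1 := mul_left_cancel₀ (pow_ne_zero k hγ) hxeq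
    rw [← Complex.exp_pi_mul_I, Complex.exp_eq_exp_iff_exists_int] at hexp
    obtain ⟨σ, hσ⟩ := hexp
    refine ⟨σ, ?_⟩
    rw [div_eq_iff hk0C] at hσ
    have h3 : (Real.pi : ℂ) * Complex.I * (2 * ((∑ j ∈ e, α j : ℤ) : ℂ)) =
        (Real.pi : ℂ) * Complex.I * (2 * (σ : ℂ) * (k : ℂ) + (k : ℂ)) := by
      linear_combination hσ
    have h4 := mul_left_cancel₀ (mul_ne_zero hπ Complex.I_ne_zero) h3
    exact_mod_cast h4
  · rintro ⟨γ, hγ, α, hα, hαE⟩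
    constructor
    · intro h0
      have hx : x ⟨0, by omega⟩ = 0 := by rw [h0]; rfl
      rw [hα ⟨0, by omega⟩] at hx
      exact mul_ne_zero hγ (Complex.exp_ne_zero _) hx
    · intro i
      simp only [slapC, hdeg]
      have hxine : x i ≠ 0 := by
        rw [hα i]; exact mul_ne_zero hγ (Complex.exp_ne_zero _)
      have hxk : x i ^ k = γ ^ k := by
        rw [hα i, mul_pow, ← Complex.exp_nat_mul]
        have h5 : (k : ℂ) * (2 * Real.pi * ((α i : ℤ) : ℂ) * Complex.I / k) =
            ((α i : ℤ) : ℂ) * (2 * Real.pi * Complex.I) := by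
          field_simp
        rw [h5, Complex.exp_int_mul_two_pi_mul_I, mul_one]
      have hterm : ∀ e ∈ E.filter (fun e => i ∈ e),
          ∏ j ∈ e.erase i, x j = -(x i ^ (k - 1)) := by
        intro e he
        rw [Finset.mem_filter] at he
        obtain ⟨heE, hie⟩ := he
        obtain ⟨σ, hσ⟩ := hαE e heE
        have hprod := prod_form γ α x hα e (hE e heE)
        have hSC : (2 : ℂ) * ((∑ j ∈ e, α j : ℤ) : ℂ) =
            2 * (σ : ℂ) * (k : ℂ) + (k : ℂ) := by exact_mod_cast hσ
        have harg : 2 * Real.pi * ((∑ j ∈ e, α j : ℤ) : ℂ) * Complex.I / k =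
            (σ : ℂ) * (2 * Real.pi * Complex.I) + Real.pi * Complex.I := by
          rw [div_eq_iff hk0C]
          linear_combination (Real.pi : ℂ) * Complex.I * hSC
        rw [harg, Complex.exp_add, Complex.exp_int_mul_two_pi_mul_I,
          Complex.exp_pi_mul_I, one_mul] at hprod
        apply mul_left_cancel₀ hxine
        rw [Finset.mul_prod_erase e x hie, hprod, ← hxk]
        have h3 : x i ^ k = x i ^ (k - 1) * x i := by rw [← pow_succ, hkk]
        rw [h3]; ring
      rw [Finset.sum_congr rfl hterm, Finset.sum_const, nsmul_eq_mul]
      ring
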